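/- For all real t with |t| ≤ 1, (arcsin t)^3 = ∑_{n=0}^∞ 6·O_n · ((2n-1)!!/(2n)!!) · t^(2n+1)/(2n+1), where O_n = ∑_{k=0}^{n-1} 1/(2k+1)^2. -/

import Mathlib

open Real Nat Filter Set

namespace ArcsinCube

noncomputable def aa (n : ℕ) : ℝ := ((2*n-1)‼ : ℕ) / (((2*n)‼ : ℕ) : ℝ)

noncomputable def OO (n : ℕ) : ℝ := ∑ k ∈ Finset.range n, 1 / ((2 * k + 1 : ℕ) : ℝ) ^ 2

noncomputable def bb (n : ℕ) : ℝ := 6 * OO n * aa n / (2*n+1)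

lemma odd_df (n : ℕ) : (2*n+1)‼ = (2*n+1) * (2*n-1)‼ := by
  cases n with
  | zero => rfl
  | succ m =>
    have h1 : 2*(m+1)+1 = (2*m+1)+2 := by omega
    have h2 : 2*(m+1)-1 = 2*m+1 := by omega
    rw [h1, h2, Nat.doubleFactorial_add_two]

lemma aa_zero : aa 0 = 1 := by simp [aa]

lemma aa_pos (n : ℕ) : 0 < aa n := by
  apply _root_.div_pos <;> exact_mod_cast Nat.doubleFactorial_pos _

lemma aa_succ (n : ℕ) : aa (n+1) = aa n * (2*n+1) / (2*n+2) := by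
  have h1 : 2*(n+1) - 1 = 2*n+1 := by omega
  have h2 : 2*(n+1) = (2*n) + 2 := by omega
  rw [aa, aa, h1, h2, Nat.doubleFactorial_add_two, odd_df]
  have hd : (((2*n)‼ : ℕ) : ℝ) ≠ 0 := by exact_mod_cast (Nat.doubleFactorial_pos _).ne'
  push_cast
  field_simp

lemma aa_le_one (n : ℕ) : aa n ≤ 1 := by
  induction n with
  | zero => simp [aa_zero]
  | succ n ih =>
    rw [aa_succ]
    have h : (0:ℝ) < 2*n+2 := by positivity
    rw [div_le_one h]
    nlinarith [aa_pos n]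

lemma aa_sq (n : ℕ) : aa n ^ 2 * (2*n+1) ≤ 1 := by
  induction n with
  | zero => simp [aa_zero]
  | succ n ih =>
    rw [aa_succ]
    have h : (0:ℝ) < 2*n+2 := by positivity
    rw [div_pow, div_mul_eq_mul_div, div_le_one (by positivity)]
    push_cast
    nlinarith [aa_pos n, sq_nonneg (aa n)]

lemma OO_nonneg (n : ℕ) : 0 ≤ OO n := by
  apply Finset.sum_nonneg; intro k _; positivity

lemma OO_le_two (n : ℕ) : OO n ≤ 2 := by
  have key : ∀ m : ℕ, OO m ≤ 2 - 2/(2*m+1 : ℝ) := by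
    intro m
    induction m with
    | zero => norm_num [OO]
    | succ m ih =>
      rw [OO, Finset.sum_range_succ, ← OO]
      have h1 : (0:ℝ) < 2*m+1 := by positivity
      have h2 : (0:ℝ) < 2*m+3 := by positivity
      have h3 : 1 / ((2 * m + 1 : ℕ) : ℝ) ^ 2 ≤ 2/(2*m+1:ℝ) - 2/(2*m+3:ℝ) := by
        rw [div_sub_div _ _ h1.ne' h2.ne', div_le_div_iff₀ (by positivity) (by positivity)]
        push_cast; nlinarith
      push_cast at *
      have h4 : 2*((m:ℝ)+1)+1 = 2*(m:ℝ)+3 := by ring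
      rw [h4]
      linarith
  have h1 : (0:ℝ) < 2*n+1 := by positivity
  have h2 : (0:ℝ) < 2/(2*(n:ℝ)+1) := by positivity
  linarith [key n]

lemma OO_succ (n : ℕ) : OO (n+1) = OO n + 1 / ((2*n+1:ℕ):ℝ)^2 := by
  rw [OO, Finset.sum_range_succ, ← OO]

lemma bb_nonneg (n : ℕ) : 0 ≤ bb n := by
  unfold bb
  have := OO_nonneg n
  have := (aa_pos n).le
  have : (0:ℝ) ≤ 2*(n:ℝ)+1 := by positivity
  apply div_nonneg (by nlinarith) (by positivity)

lemma bb_le (n : ℕ) : bb n ≤ 12 := by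
  unfold bb
  rw [div_le_iff₀ (by positivity : (0:ℝ) < 2*(n:ℝ)+1)]
  nlinarith [aa_pos n, aa_le_one n, OO_nonneg n, OO_le_two n,
    (by positivity : (0:ℝ) < 2*(n:ℝ)+1)]

lemma bb_rec (n : ℕ) :
    bb (n+1) * ((2*n+3) * (2*n+2)) = (2*n+1)^2 * bb n + 6 * aa n / (2*n+1) := by
  have h1 : (0:ℝ) < 2*(n:ℝ)+1 := by positivity
  have h3 : (0:ℝ) < 2*(n:ℝ)+3 := by positivity
  unfold bb
  rw [aa_succ, OO_succ]
  push_cast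
  field_simp
  ring


lemma summable_poly_geom {q : ℝ} (h0 : 0 ≤ q) (hq : q < 1) (k : ℕ) :
    Summable (fun n : ℕ => ((n : ℝ) + 1) ^ k * q ^ n) := by
  rcases eq_or_lt_of_le h0 with h | h
  · apply summable_of_ne_finset_zero (s := {0})
    intro n hn
    simp only [Finset.mem_singleton] at hn
    rw [← h, zero_pow hn, mul_zero]
  · have hs := summable_pow_mul_geometric_of_norm_lt_one (R := ℝ) k
      (r := q) (by rwa [Real.norm_eq_abs, abs_of_pos h])
    have h2 : Summable (fun n : ℕ => ((n + 1 : ℕ) : ℝ) ^ k * q ^ (n + 1)) :=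
      (summable_nat_add_iff 1).2 hs
    have h3 := h2.div_const q
    apply h3.congr
    intro n
    push_cast
    rw [pow_succ]
    field_simp

lemma summable_of_poly_bound (c : ℕ → ℝ) (e : ℕ → ℕ) (k : ℕ) (C : ℝ)
    (hc : ∀ n, |c n| ≤ C * ((n : ℝ) + 1) ^ k) (he : ∀ n, n ≤ e n) {t : ℝ}
    (ht : |t| < 1) : Summable (fun n => c n * t ^ e n) := by
  apply Summable.of_norm_bounded (g := fun n : ℕ => C * (((n : ℝ) + 1) ^ k * |t| ^ n))
    ((summable_poly_geom (abs_nonneg t) ht k).mul_left C)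
  intro n
  rw [norm_mul, norm_pow, Real.norm_eq_abs, Real.norm_eq_abs]
  have h1 : |t| ^ e n ≤ |t| ^ n := pow_le_pow_of_le_one (abs_nonneg t) ht.le (he n)
  calc |c n| * |t| ^ e n ≤ (C * ((n : ℝ) + 1) ^ k) * |t| ^ n :=
        mul_le_mul (hc n) h1 (by positivity) (le_trans (abs_nonneg _) (hc n))
    _ = C * (((n : ℝ) + 1) ^ k * |t| ^ n) := by ring

lemma hasDerivAt_tsum_pow (c : ℕ → ℝ) (e : ℕ → ℕ) (k : ℕ) (C : ℝ)
    (hc : ∀ n, |c n| ≤ C * ((n : ℝ) + 1) ^ k)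
    (he2 : ∀ n, e n ≤ 2 * n + 2) (he1 : ∀ n, n ≤ e n - 1) {t : ℝ} (ht : |t| < 1) :
    HasDerivAt (fun x => ∑' n, c n * x ^ e n)
      (∑' n, c n * (e n : ℝ) * t ^ (e n - 1)) t := by
  have hC : 0 ≤ C := le_trans (abs_nonneg _) (by simpa using hc 0)
  set r : ℝ := (|t| + 1) / 2 with hrdef
  have h0t := abs_nonneg t
  have hr0 : 0 < r := by rw [hrdef]; positivity
  have hr1 : r < 1 := by rw [hrdef]; linarith
  have htr : |t| < r := by rw [hrdef]; linarith
  have hball : t ∈ Metric.ball (0 : ℝ) r := by simpa [Real.norm_eq_abs] using htr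
  have h0ball : (0 : ℝ) ∈ Metric.ball (0 : ℝ) r := by simpa using hr0
  refine hasDerivAt_tsum_of_isPreconnected (𝕜 := ℝ) (F := ℝ)
    (g := fun n x => c n * x ^ e n) (g' := fun n y => c n * (e n : ℝ) * y ^ (e n - 1))
    (u := fun n : ℕ => (2 * C) * (((n : ℝ) + 1) ^ (k + 1) * r ^ n))
    (((summable_poly_geom hr0.le hr1 (k + 1)).mul_left _))
    Metric.isOpen_ball ((convex_ball _ _).isPreconnected)
    (fun n y _ => ?_) (fun n y hy => ?_) h0ball ?_ hball
  · have := (hasDerivAt_pow (e n) y).const_mul (c n)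
    simpa [mul_assoc] using this
  · rw [mem_ball_zero_iff, Real.norm_eq_abs] at hy
    rw [norm_mul, norm_mul, norm_pow, Real.norm_eq_abs, Real.norm_eq_abs, Real.norm_eq_abs]
    have hyr : |y| ≤ r := hy.le
    have h1 : |y| ^ (e n - 1) ≤ r ^ (e n - 1) := pow_le_pow_left₀ (abs_nonneg y) hyr _
    have h2 : r ^ (e n - 1) ≤ r ^ n := pow_le_pow_of_le_one hr0.le hr1.le (he1 n)
    have h3 : |(e n : ℝ)| ≤ 2 * (n : ℝ) + 2 := by
      rw [Nat.abs_cast]; exact_mod_cast he2 n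
    calc |c n| * |(e n : ℝ)| * |y| ^ (e n - 1)
        ≤ (C * ((n : ℝ) + 1) ^ k) * (2 * (n : ℝ) + 2) * r ^ n := by
          apply mul_le_mul _ (h1.trans h2) (by positivity) (by positivity)
          exact mul_le_mul (hc n) h3 (abs_nonneg _) (by positivity)
      _ = (2 * C) * (((n : ℝ) + 1) ^ (k + 1) * r ^ n) := by ring
  · apply summable_of_ne_finset_zero (s := {0})
    intro n hn
    simp only [Finset.mem_singleton] at hn
    have h : 0 < e n := by have := he1 n; omega
    rw [zero_pow h.ne', mul_zero]


noncomputable def FF (t : ℝ) : ℝ := ∑' n, bb n * t ^ (2*n+1)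
noncomputable def FF1 (t : ℝ) : ℝ := ∑' n, (bb n * (2*(n:ℝ)+1)) * t ^ (2*n)
noncomputable def FF2 (t : ℝ) : ℝ := ∑' n, (bb n * (2*(n:ℝ)+1) * (2*(n:ℝ))) * t ^ (2*n-1)
noncomputable def GG (t : ℝ) : ℝ := ∑' n, (aa n / (2*(n:ℝ)+1)) * t ^ (2*n+1)
noncomputable def GG1 (t : ℝ) : ℝ := ∑' n, aa n * t ^ (2*n)
noncomputable def GG2 (t : ℝ) : ℝ := ∑' n, (aa n * (2*(n:ℝ))) * t ^ (2*n-1)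

lemma cb_F (n : ℕ) : |bb n| ≤ 12 * ((n:ℝ)+1)^0 := by
  rw [abs_of_nonneg (bb_nonneg n), pow_zero, mul_one]; exact bb_le n

lemma cb_F1 (n : ℕ) : |bb n * (2*(n:ℝ)+1)| ≤ 24 * ((n:ℝ)+1)^1 := by
  have h1 : (0:ℝ) ≤ 2*(n:ℝ)+1 := by positivity
  rw [abs_of_nonneg (mul_nonneg (bb_nonneg n) h1)]
  have := bb_nonneg n; have := bb_le n
  nlinarith [Nat.cast_nonneg (α := ℝ) n]

lemma cb_F2 (n : ℕ) : |bb n * (2*(n:ℝ)+1) * (2*(n:ℝ))| ≤ 48 * ((n:ℝ)+1)^2 := by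
  have hn : (0:ℝ) ≤ (n:ℝ) := Nat.cast_nonneg n
  have h1 : (0:ℝ) ≤ 2*(n:ℝ)+1 := by positivity
  rw [abs_of_nonneg (mul_nonneg (mul_nonneg (bb_nonneg n) h1) (by positivity))]
  have := bb_nonneg n; have := bb_le n
  nlinarith

lemma cb_Fs (n : ℕ) : |bb (n+1) * ((2*(n:ℝ)+3) * (2*(n:ℝ)+2))| ≤ 192 * ((n:ℝ)+1)^2 := by
  have hn : (0:ℝ) ≤ (n:ℝ) := Nat.cast_nonneg n
  have h1 : (0:ℝ) ≤ (2*(n:ℝ)+3) * (2*(n:ℝ)+2) := by positivity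
  rw [abs_of_nonneg (mul_nonneg (bb_nonneg _) h1)]
  have := bb_nonneg (n+1); have := bb_le (n+1)
  nlinarith

lemma cb_G (n : ℕ) : |aa n / (2*(n:ℝ)+1)| ≤ 1 * ((n:ℝ)+1)^0 := by
  have hn : (0:ℝ) ≤ (n:ℝ) := Nat.cast_nonneg n
  have h1 : (0:ℝ) < 2*(n:ℝ)+1 := by positivity
  rw [abs_of_nonneg (div_nonneg (aa_pos n).le h1.le), pow_zero, mul_one,
    div_le_one h1]
  have := aa_le_one n
  linarith

lemma cb_G1 (n : ℕ) : |aa n| ≤ 1 * ((n:ℝ)+1)^0 := by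
  rw [abs_of_nonneg (aa_pos n).le, pow_zero, mul_one]; exact aa_le_one n

lemma cb_G1' (n : ℕ) : |aa n * (2*(n:ℝ)+1)| ≤ 3 * ((n:ℝ)+1)^1 := by
  have hn : (0:ℝ) ≤ (n:ℝ) := Nat.cast_nonneg n
  have h1 : (0:ℝ) ≤ 2*(n:ℝ)+1 := by positivity
  rw [abs_of_nonneg (mul_nonneg (aa_pos n).le h1)]
  have := aa_le_one n; have := (aa_pos n).le
  nlinarith

lemma cb_G2 (n : ℕ) : |aa n * (2*(n:ℝ))| ≤ 2 * ((n:ℝ)+1)^1 := by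
  have hn : (0:ℝ) ≤ (n:ℝ) := Nat.cast_nonneg n
  rw [abs_of_nonneg (mul_nonneg (aa_pos n).le (by positivity))]
  have := aa_le_one n; have := (aa_pos n).le
  nlinarith

lemma hasDerivAt_FF {t : ℝ} (ht : |t| < 1) : HasDerivAt FF (FF1 t) t := by
  have h := hasDerivAt_tsum_pow bb (fun n => 2*n+1) 0 12 cb_F
    (fun n => by first | (dsimp only; omega) | omega) (fun n => by first | (dsimp only; omega) | omega) ht
  have h2 : FF1 t = ∑' n, bb n * ((2*n+1 : ℕ) : ℝ) * t ^ (2*n+1-1) := by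
    apply tsum_congr; intro n
    have he : 2*n+1-1 = 2*n := by omega
    rw [he]; push_cast; ring
  rw [h2]; exact h

lemma hasDerivAt_FF1 {t : ℝ} (ht : |t| < 1) : HasDerivAt FF1 (FF2 t) t := by
  have h := hasDerivAt_tsum_pow (fun n => bb n * (2*(n:ℝ)+1)) (fun n => 2*n) 1 24 cb_F1
    (fun n => by first | (dsimp only; omega) | omega) (fun n => by first | (dsimp only; omega) | omega) ht
  have h2 : FF2 t = ∑' n, (bb n * (2*(n:ℝ)+1)) * ((2*n : ℕ) : ℝ) * t ^ (2*n-1) := by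
    apply tsum_congr; intro n
    push_cast; ring
  rw [h2]; exact h

lemma hasDerivAt_GG {t : ℝ} (ht : |t| < 1) : HasDerivAt GG (GG1 t) t := by
  have h := hasDerivAt_tsum_pow (fun n => aa n / (2*(n:ℝ)+1)) (fun n => 2*n+1) 0 1 cb_G
    (fun n => by first | (dsimp only; omega) | omega) (fun n => by first | (dsimp only; omega) | omega) ht
  have h2 : GG1 t = ∑' n, (aa n / (2*(n:ℝ)+1)) * ((2*n+1 : ℕ) : ℝ) * t ^ (2*n+1-1) := by
    apply tsum_congr; intro n
    have he : 2*n+1-1 = 2*n := by omega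
    have h1 : (2*(n:ℝ)+1) ≠ 0 := by positivity
    rw [he]; push_cast; field_simp
  rw [h2]; exact h

lemma hasDerivAt_GG1 {t : ℝ} (ht : |t| < 1) : HasDerivAt GG1 (GG2 t) t := by
  have h := hasDerivAt_tsum_pow aa (fun n => 2*n) 0 1 cb_G1
    (fun n => by first | (dsimp only; omega) | omega) (fun n => by first | (dsimp only; omega) | omega) ht
  have h2 : GG2 t = ∑' n, aa n * ((2*n : ℕ) : ℝ) * t ^ (2*n-1) := by
    apply tsum_congr; intro n
    push_cast; ring
  rw [h2]; exact h

lemma key_G {t : ℝ} (ht : |t| < 1) : (1 - t^2) * GG2 t = t * GG1 t := by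
  have sum2 : Summable (fun n => (aa n * (2*(n:ℝ))) * t ^ (2*n-1)) :=
    summable_of_poly_bound _ _ 1 2 cb_G2 (fun n => by first | (dsimp only; omega) | omega) ht
  have hA : GG2 t = ∑' n, (aa n * (2*(n:ℝ)+1)) * t ^ (2*n+1) := by
    rw [GG2, Summable.tsum_eq_zero_add sum2]
    norm_num
    apply tsum_congr; intro n
    have he : 2*(n+1)-1 = 2*n+1 := by omega
    have h1 : (2*(n:ℝ)+2) ≠ 0 := by positivity
    rw [he, aa_succ]
    push_cast
    field_simp
  have hB : t^2 * GG2 t = ∑' n, (aa n * (2*(n:ℝ))) * t ^ (2*n+1) := by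
    rw [GG2, ← tsum_mul_left]
    apply tsum_congr; intro n
    cases n with
    | zero => norm_num
    | succ m =>
      have he : 2*(m+1)-1 = 2*m+1 := by omega
      rw [he]
      push_cast
      ring
  have hsum1 : Summable (fun n => (aa n * (2*(n:ℝ)+1)) * t ^ (2*n+1)) :=
    summable_of_poly_bound _ _ 1 3 cb_G1' (fun n => by first | (dsimp only; omega) | omega) ht
  have hsum2 : Summable (fun n => (aa n * (2*(n:ℝ))) * t ^ (2*n+1)) :=
    summable_of_poly_bound _ _ 1 2 cb_G2 (fun n => by first | (dsimp only; omega) | omega) ht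
  calc (1 - t^2) * GG2 t = GG2 t - t^2 * GG2 t := by ring
    _ = ∑' n, ((aa n * (2*(n:ℝ)+1)) * t ^ (2*n+1) - (aa n * (2*(n:ℝ))) * t ^ (2*n+1)) := by
        rw [hB, hA, Summable.tsum_sub hsum1 hsum2]
    _ = ∑' n, t * (aa n * t ^ (2*n)) := tsum_congr (fun n => by ring)
    _ = t * GG1 t := by rw [GG1, tsum_mul_left]

lemma key_F {t : ℝ} (ht : |t| < 1) : (1 - t^2) * FF2 t - t * FF1 t = 6 * GG t := by
  have sum2 : Summable (fun n => (bb n * (2*(n:ℝ)+1) * (2*(n:ℝ))) * t ^ (2*n-1)) :=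
    summable_of_poly_bound _ _ 2 48 cb_F2 (fun n => by first | (dsimp only; omega) | omega) ht
  have hA : FF2 t = ∑' n, (bb (n+1) * ((2*(n:ℝ)+3) * (2*(n:ℝ)+2))) * t ^ (2*n+1) := by
    rw [FF2, Summable.tsum_eq_zero_add sum2]
    norm_num
    apply tsum_congr; intro n
    have he : 2*(n+1)-1 = 2*n+1 := by omega
    rw [he]
    push_cast
    ring
  have hB : t^2 * FF2 t = ∑' n, (bb n * (2*(n:ℝ)+1) * (2*(n:ℝ))) * t ^ (2*n+1) := by
    rw [FF2, ← tsum_mul_left]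
    apply tsum_congr; intro n
    cases n with
    | zero => norm_num
    | succ m =>
      have he : 2*(m+1)-1 = 2*m+1 := by omega
      rw [he]
      push_cast
      ring
  have hC : t * FF1 t = ∑' n, (bb n * (2*(n:ℝ)+1)) * t ^ (2*n+1) := by
    rw [FF1, ← tsum_mul_left]
    apply tsum_congr; intro n
    ring
  have hsA : Summable (fun n => (bb (n+1) * ((2*(n:ℝ)+3) * (2*(n:ℝ)+2))) * t ^ (2*n+1)) :=
    summable_of_poly_bound _ _ 2 192 cb_Fs (fun n => by first | (dsimp only; omega) | omega) ht
  have hsB : Summable (fun n => (bb n * (2*(n:ℝ)+1) * (2*(n:ℝ))) * t ^ (2*n+1)) :=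
    summable_of_poly_bound _ _ 2 48 cb_F2 (fun n => by first | (dsimp only; omega) | omega) ht
  have hsC : Summable (fun n => (bb n * (2*(n:ℝ)+1)) * t ^ (2*n+1)) :=
    summable_of_poly_bound _ _ 1 24 cb_F1 (fun n => by first | (dsimp only; omega) | omega) ht
  calc (1 - t^2) * FF2 t - t * FF1 t
      = FF2 t - (t^2 * FF2 t + t * FF1 t) := by ring
    _ = ∑' n, ((bb (n+1) * ((2*(n:ℝ)+3) * (2*(n:ℝ)+2))) * t ^ (2*n+1)
          - ((bb n * (2*(n:ℝ)+1) * (2*(n:ℝ))) * t ^ (2*n+1)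
            + (bb n * (2*(n:ℝ)+1)) * t ^ (2*n+1))) := by
        rw [hB, hC, hA, ← Summable.tsum_add hsB hsC, Summable.tsum_sub hsA (hsB.add hsC)]
    _ = ∑' n, 6 * ((aa n / (2*(n:ℝ)+1)) * t ^ (2*n+1)) := by
        apply tsum_congr; intro n
        have hrec := bb_rec n
        have : bb (n+1) * ((2*(n:ℝ)+3) * (2*(n:ℝ)+2))
            - (bb n * (2*(n:ℝ)+1) * (2*(n:ℝ)) + bb n * (2*(n:ℝ)+1))
            = 6 * (aa n / (2*(n:ℝ)+1)) := by
          rw [mul_div_assoc] at hrec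
          nlinarith [hrec]
        linear_combination t ^ (2*n+1) * this
    _ = 6 * GG t := by rw [GG, tsum_mul_left]

lemma const_on_Ioo {f : ℝ → ℝ} (hf : ∀ x ∈ Ioo (-1:ℝ) 1, HasDerivAt f 0 x)
    {x : ℝ} (hx : x ∈ Ioo (-1:ℝ) 1) : f x = f 0 := by
  rcases le_or_gt 0 x with h | h
  · have sub : Icc (0:ℝ) x ⊆ Ioo (-1) 1 := fun y hy =>
      ⟨lt_of_lt_of_le (by norm_num) hy.1, lt_of_le_of_lt hy.2 hx.2⟩
    exact constant_of_has_deriv_right_zero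
      (fun y hy => (hf y (sub hy)).continuousAt.continuousWithinAt)
      (fun y hy => (hf y (sub (Ico_subset_Icc_self hy))).hasDerivWithinAt)
      x (right_mem_Icc.2 h)
  · have sub : Icc x 0 ⊆ Ioo (-1) 1 := fun y hy =>
      ⟨lt_of_lt_of_le hx.1 hy.1, lt_of_le_of_lt hy.2 (by norm_num)⟩
    exact (constant_of_has_deriv_right_zero
      (fun y hy => (hf y (sub hy)).continuousAt.continuousWithinAt)
      (fun y hy => (hf y (sub (Ico_subset_Icc_self hy))).hasDerivWithinAt)
      0 (right_mem_Icc.2 h.le)).symm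

lemma GG1_zero : GG1 0 = 1 := by
  rw [GG1, tsum_eq_single 0 ?_]
  · simp [aa_zero]
  · intro n hn
    have h : 0 < 2*n := by omega
    rw [zero_pow h.ne', mul_zero]

lemma bb_zero : bb 0 = 0 := by simp [bb, OO]

lemma FF1_zero : FF1 0 = 0 := by
  rw [FF1, tsum_eq_single 0 ?_]
  · simp [bb_zero]
  · intro n hn
    have h : 0 < 2*n := by omega
    rw [zero_pow h.ne', mul_zero]

lemma FF_zero : FF 0 = 0 := by
  rw [FF]
  refine (tsum_congr (fun n => ?_)).trans tsum_zero
  rw [zero_pow (by omega : 2*n+1 ≠ 0), mul_zero]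

lemma GG_zero : GG 0 = 0 := by
  rw [GG]
  refine (tsum_congr (fun n => ?_)).trans tsum_zero
  rw [zero_pow (by omega : 2*n+1 ≠ 0), mul_zero]

lemma one_sub_sq_pos {x : ℝ} (hx : |x| < 1) : (0:ℝ) < 1 - x^2 := by
  have h := abs_lt.1 hx
  nlinarith [h.1, h.2]

lemma hasDerivAt_sqrt_one_sub_sq {x : ℝ} (hx : |x| < 1) :
    HasDerivAt (fun y => Real.sqrt (1 - y^2)) (-x / Real.sqrt (1 - x^2)) x := by
  have h1 := one_sub_sq_pos hx
  have hs : Real.sqrt (1 - x^2) ≠ 0 := (Real.sqrt_pos.2 h1).ne'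
  have hf : HasDerivAt (fun y : ℝ => 1 - y^2) (-(2*x)) x := by
    simpa using (hasDerivAt_pow 2 x).const_sub 1
  have h := hf.sqrt h1.ne'
  convert h using 1
  field_simp

lemma interior_eq {t : ℝ} (ht : |t| < 1) : FF t = Real.arcsin t ^ 3 := by
  have hmem : ∀ x : ℝ, x ∈ Ioo (-1:ℝ) 1 → |x| < 1 := fun x hx => abs_lt.2 ⟨hx.1, hx.2⟩
  have htI : t ∈ Ioo (-1:ℝ) 1 := ⟨(abs_lt.1 ht).1, (abs_lt.1 ht).2⟩
  have stepA : ∀ x ∈ Ioo (-1:ℝ) 1, GG1 x * Real.sqrt (1 - x^2) = 1 := by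
    intro x hx
    have h : GG1 x * Real.sqrt (1 - x^2) = GG1 0 * Real.sqrt (1 - (0:ℝ)^2) :=
      const_on_Ioo (f := fun y => GG1 y * Real.sqrt (1 - y^2)) ?_ hx
    · rw [h]; norm_num [GG1_zero]
    · intro y hy
      have hy1 := hmem y hy
      have hpos := one_sub_sq_pos hy1
      have hs : Real.sqrt (1 - y^2) ≠ 0 := (Real.sqrt_pos.2 hpos).ne'
      have hmul : Real.sqrt (1-y^2) * Real.sqrt (1-y^2) = 1 - y^2 := Real.mul_self_sqrt hpos.le
      have hd := (hasDerivAt_GG1 hy1).mul (hasDerivAt_sqrt_one_sub_sq hy1)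
      have hval : GG2 y * Real.sqrt (1 - y^2) + GG1 y * (-y / Real.sqrt (1 - y^2)) = 0 := by
        have hk := key_G hy1
        field_simp
        linear_combination hk + GG2 y * hmul
      exact hval ▸ hd
  have stepB : ∀ x ∈ Ioo (-1:ℝ) 1, GG x = Real.arcsin x := by
    intro x hx
    have h : GG x - Real.arcsin x = GG 0 - Real.arcsin 0 :=
      const_on_Ioo (f := fun y => GG y - Real.arcsin y) ?_ hx
    · rw [GG_zero, Real.arcsin_zero] at h
      linarith [h]
    · intro y hy
      have hy1 := hmem y hy
      have hpos := one_sub_sq_pos hy1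
      have hs : Real.sqrt (1 - y^2) ≠ 0 := (Real.sqrt_pos.2 hpos).ne'
      have hd := (hasDerivAt_GG hy1).sub (Real.hasDerivAt_arcsin (ne_of_gt hy.1) (ne_of_lt hy.2))
      have hval : GG1 y - 1 / Real.sqrt (1 - y^2) = 0 := by
        rw [sub_eq_zero, eq_div_iff hs]
        exact stepA y hy
      exact hval ▸ hd
  have stepC : ∀ x ∈ Ioo (-1:ℝ) 1,
      Real.sqrt (1 - x^2) * FF1 x - 3 * Real.arcsin x ^ 2 = 0 := by
    intro x hx
    have h : Real.sqrt (1-x^2) * FF1 x - 3 * Real.arcsin x ^ 2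
        = Real.sqrt (1-(0:ℝ)^2) * FF1 0 - 3 * Real.arcsin 0 ^ 2 :=
      const_on_Ioo (f := fun y => Real.sqrt (1-y^2) * FF1 y - 3 * Real.arcsin y ^ 2) ?_ hx
    · rw [h]; norm_num [FF1_zero, Real.arcsin_zero]
    · intro y hy
      have hy1 := hmem y hy
      have hpos := one_sub_sq_pos hy1
      have hs : Real.sqrt (1 - y^2) ≠ 0 := (Real.sqrt_pos.2 hpos).ne'
      have hmul : Real.sqrt (1-y^2) * Real.sqrt (1-y^2) = 1 - y^2 := Real.mul_self_sqrt hpos.le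
      have hd := ((hasDerivAt_sqrt_one_sub_sq hy1).mul (hasDerivAt_FF1 hy1)).sub
        (((Real.hasDerivAt_arcsin (ne_of_gt hy.1) (ne_of_lt hy.2)).pow 2).const_mul 3)
      have hk : (1 - y^2) * FF2 y - y * FF1 y = 6 * Real.arcsin y := by
        rw [← stepB y hy]; exact key_F hy1
      have hval : -y / Real.sqrt (1-y^2) * FF1 y + Real.sqrt (1-y^2) * FF2 y
          - 3 * ((2:ℕ) * Real.arcsin y ^ (2-1) * (1 / Real.sqrt (1-y^2))) = 0 := by
        field_simp
        linear_combination hk + FF2 y * hmul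
      exact hval ▸ hd
  have h : FF t - Real.arcsin t ^ 3 = FF 0 - Real.arcsin 0 ^ 3 :=
    const_on_Ioo (f := fun y => FF y - Real.arcsin y ^ 3) ?_ htI
  · rw [FF_zero, Real.arcsin_zero] at h
    norm_num at h
    linarith [h]
  · intro y hy
    have hy1 := hmem y hy
    have hpos := one_sub_sq_pos hy1
    have hs : Real.sqrt (1 - y^2) ≠ 0 := (Real.sqrt_pos.2 hpos).ne'
    have hd := (hasDerivAt_FF hy1).sub
      ((Real.hasDerivAt_arcsin (ne_of_gt hy.1) (ne_of_lt hy.2)).pow 3)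
    have hC := stepC y hy
    have hval : FF1 y - (3:ℕ) * Real.arcsin y ^ (3-1) * (1 / Real.sqrt (1-y^2)) = 0 := by
      field_simp
      linear_combination hC
    exact hval ▸ hd

lemma aa_div_le (n : ℕ) : aa n / (2*(n:ℝ)+1) ≤ 1 / ((n:ℝ)+1) ^ ((3:ℝ)/2) := by
  have hn : (0:ℝ) ≤ n := n.cast_nonneg
  have h1 : (0:ℝ) < 2*(n:ℝ)+1 := by positivity
  have h2 : (0:ℝ) < (n:ℝ)+1 := by positivity
  have hL : 0 ≤ aa n / (2*(n:ℝ)+1) := div_nonneg (aa_pos n).le h1.le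
  have hrp : (((n:ℝ)+1) ^ ((3:ℝ)/2))^2 = ((n:ℝ)+1)^3 := by
    rw [← Real.rpow_natCast (((n:ℝ)+1) ^ ((3:ℝ)/2)) 2, ← Real.rpow_mul h2.le]
    norm_num
  have hsq : (aa n / (2*(n:ℝ)+1))^2 ≤ (1 / ((n:ℝ)+1) ^ ((3:ℝ)/2))^2 := by
    rw [div_pow, div_pow, one_pow, hrp, div_le_div_iff₀ (by positivity) (by positivity)]
    have hle : ((n:ℝ)+1)^3 ≤ (2*(n:ℝ)+1)^3 := by
      apply pow_le_pow_left₀ h2.le (by linarith)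
    nlinarith [aa_sq n, sq_nonneg (aa n), pow_pos h1 3, pow_pos h2 3]
  calc aa n / (2*(n:ℝ)+1) = Real.sqrt ((aa n / (2*(n:ℝ)+1))^2) := (Real.sqrt_sq hL).symm
    _ ≤ Real.sqrt ((1 / ((n:ℝ)+1) ^ ((3:ℝ)/2))^2) := Real.sqrt_le_sqrt hsq
    _ = 1 / ((n:ℝ)+1) ^ ((3:ℝ)/2) := Real.sqrt_sq (by positivity)

lemma summable_u : Summable (fun n : ℕ => 12 * (1 / ((n:ℝ)+1) ^ ((3:ℝ)/2))) := by
  apply Summable.mul_left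
  have h := (Real.summable_one_div_nat_rpow (p := 3/2)).2 (by norm_num)
  have h2 := (summable_nat_add_iff 1).2 h
  apply h2.congr
  intro n
  push_cast
  norm_num

lemma continuousOn_FF : ContinuousOn FF (Icc (-1:ℝ) 1) := by
  apply continuousOn_tsum (u := fun n : ℕ => 12 * (1 / ((n:ℝ)+1) ^ ((3:ℝ)/2)))
    (fun i => (continuous_const.mul (continuous_pow _)).continuousOn) summable_u
  intro n x hx
  have hx1 : |x| ≤ 1 := abs_le.2 ⟨hx.1, hx.2⟩
  have h1 : (0:ℝ) < 2*(n:ℝ)+1 := by positivity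
  simp only [Pi.mul_apply]
  rw [Real.norm_eq_abs, abs_mul, abs_of_nonneg (bb_nonneg n), abs_pow]
  have hp : |x|^(2*n+1) ≤ 1 := pow_le_one₀ (abs_nonneg x) hx1
  have hb : bb n ≤ 12 * (1 / ((n:ℝ)+1) ^ ((3:ℝ)/2)) := by
    have h6 : 6 * OO n * aa n ≤ 12 * aa n := by
      nlinarith [OO_nonneg n, OO_le_two n, (aa_pos n).le]
    have : bb n ≤ 12 * aa n / (2*(n:ℝ)+1) := by
      rw [bb, div_le_div_iff₀ h1 h1]
      nlinarith [h6]
    calc bb n ≤ 12 * aa n / (2*(n:ℝ)+1) := this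
      _ = 12 * (aa n / (2*(n:ℝ)+1)) := by ring
      _ ≤ 12 * (1 / ((n:ℝ)+1) ^ ((3:ℝ)/2)) := by
          have := aa_div_le n
          linarith
  calc bb n * |x|^(2*n+1) ≤ bb n * 1 :=
        mul_le_mul_of_nonneg_left hp (bb_nonneg n)
    _ = bb n := mul_one _
    _ ≤ 12 * (1 / ((n:ℝ)+1) ^ ((3:ℝ)/2)) := hb

lemma eq_on_Icc {t : ℝ} (ht : |t| ≤ 1) : Real.arcsin t ^ 3 = FF t := by
  have hIcc : t ∈ Icc (-1:ℝ) 1 := ⟨(abs_le.1 ht).1, (abs_le.1 ht).2⟩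
  have heq : Set.EqOn (fun x => Real.arcsin x ^ 3) FF (Ioo (-1:ℝ) 1) := fun x hx =>
    (interior_eq (abs_lt.2 ⟨hx.1, hx.2⟩)).symm
  have hcl : Icc (-1:ℝ) 1 ⊆ closure (Ioo (-1:ℝ) 1) := by
    rw [closure_Ioo (by norm_num : (-1:ℝ) ≠ 1)]
  exact heq.of_subset_closure
    ((Real.continuous_arcsin.pow 3).continuousOn) continuousOn_FF
    Ioo_subset_Icc_self hcl hIcc

end ArcsinCube

theorem arcsin_cube_series (t : ℝ) (ht : |t| ≤ 1) :
    (Real.arcsin t) ^ 3 =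
      ∑' n : ℕ, 6 * (∑ k ∈ Finset.range n, 1 / ((2 * k + 1 : ℕ) : ℝ) ^ 2) *
        (((2 * n - 1)‼ : ℝ) / ((2 * n)‼ : ℝ)) * t ^ (2 * n + 1) / (2 * n + 1) := by
  rw [ArcsinCube.eq_on_Icc ht, ArcsinCube.FF]
  apply tsum_congr
  intro n
  rw [ArcsinCube.bb, ArcsinCube.OO, ArcsinCube.aa]
  push_cast
  ring
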